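/- Let L be a group and let μ : M → L and ν : N → L be crossed modules of groups over L, with induced mutual actions ᵐn := ^(μ(m))n and ⁿm := ^(ν(n))m. Let λ : M ⊗ N → L be the unique group homomorphism with λ(m ⊗ n) = μ(m)·ν(n)·μ(m)⁻¹·ν(n)⁻¹, and let L act on M ⊗ N by the unique action by automorphisms with ˡ(m ⊗ n) = (ˡm) ⊗ (ˡn). Then (λ, this action) is a crossed module of groups over L: λ(ˡt) = l·λ(t)·l⁻¹ and ^(λ(t))t' = t·t'·t⁻¹ for all l ∈ L and t, t' ∈ M ⊗ N. -/
import Mathlib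


/-- A crossed module of groups: a homomorphism `μ : M → L` together with an action of `L`
on `M` by automorphisms, such that `μ` is equivariant (with `L` acting on itself by
conjugation) and the Peiffer identity holds. -/
def IsCrossedModule {M L : Type*} [Group M] [Group L]
    (μ : M →* L) (σ : L →* MulAut M) : Prop :=
  (∀ l m, μ (σ l m) = l * μ m * l⁻¹) ∧ ∀ m m', σ (μ m) m' = m * m' * m⁻¹

/-- The defining relations of the Brown–Loday non-abelian tensor product of two groups `M`
and `N` acting on each other via `actM : M → N → N` and `actN : N → M → M` (and on
themselves by conjugation): `(m * m') ⊗ n = (ᵐm' ⊗ ᵐn) * (m ⊗ n)` and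
`m ⊗ (n * n') = (m ⊗ n) * (ⁿm ⊗ ⁿn')`. -/
def tensorRels (M N : Type*) [Group M] [Group N]
    (actM : M → N → N) (actN : N → M → M) : Set (FreeGroup (M × N)) :=
  (Set.range fun p : M × M × N =>
    FreeGroup.of (p.1 * p.2.1, p.2.2) *
      (FreeGroup.of (p.1 * p.2.1 * p.1⁻¹, actM p.1 p.2.2) * FreeGroup.of (p.1, p.2.2))⁻¹) ∪
  (Set.range fun p : M × N × N =>
    FreeGroup.of (p.1, p.2.1 * p.2.2) *
      (FreeGroup.of (p.1, p.2.1) *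
        FreeGroup.of (actN p.2.1 p.1, p.2.1 * p.2.2 * p.2.1⁻¹))⁻¹)

/-- The Brown–Loday non-abelian tensor product `M ⊗ N` of groups `M` and `N` acting on
each other, presented by generators `m ⊗ n` and the tensor relations. -/
abbrev NATensor (M N : Type*) [Group M] [Group N]
    (actM : M → N → N) (actN : N → M → M) : Type _ :=
  PresentedGroup (tensorRels M N actM actN)

/-- The generator `m ⊗ n` of the non-abelian tensor product. -/
abbrev tensorOf {M N : Type*} [Group M] [Group N]
    {actM : M → N → N} {actN : N → M → M} (m : M) (n : N) :
    NATensor M N actM actN :=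
  PresentedGroup.of (m, n)

/- ### Auxiliary lemmas -/

lemma NATensor.mk_rel_one {α : Type*} {rels : Set (FreeGroup α)} {r : FreeGroup α}
    (h : r ∈ rels) : PresentedGroup.mk rels r = 1 :=
  (QuotientGroup.eq_one_iff r).mpr (Subgroup.subset_normalClosure h)

section Aux

variable {M N L : Type*} [Group M] [Group N] [Group L]
  (μ : M →* L) (ν : N →* L) (σM : L →* MulAut M) (σN : L →* MulAut N)

/-- Abbreviation for the tensor product appearing in the theorem. -/
abbrev NATensor.T : Type _ :=
  NATensor M N (fun m n => σN (μ m) n) (fun n m => σM (ν n) m)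

lemma NATensor.compM (x y : L) (a : M) : σM x (σM y a) = σM (x * y) a := by
  rw [map_mul]; rfl

lemma NATensor.compN (x y : L) (b : N) : σN x (σN y b) = σN (x * y) b := by
  rw [map_mul]; rfl

lemma NATensor.rel1 (m m' : M) (n : N) :
    (tensorOf (m * m') n : NATensor.T μ ν σM σN) =
      tensorOf (m * m' * m⁻¹) (σN (μ m) n) * tensorOf m n := by
  have hmem : (FreeGroup.of (m * m', n) *
      (FreeGroup.of (m * m' * m⁻¹, σN (μ m) n) * FreeGroup.of (m, n))⁻¹) ∈
      tensorRels M N (fun m n => σN (μ m) n) (fun n m => σM (ν n) m) :=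
    Or.inl ⟨(m, m', n), rfl⟩
  have h := NATensor.mk_rel_one hmem
  rw [map_mul, map_inv, map_mul] at h
  exact mul_inv_eq_one.mp h

lemma NATensor.rel2 (m : M) (n n' : N) :
    (tensorOf m (n * n') : NATensor.T μ ν σM σN) =
      tensorOf m n * tensorOf (σM (ν n) m) (n * n' * n⁻¹) := by
  have hmem : (FreeGroup.of (m, n * n') *
      (FreeGroup.of (m, n) * FreeGroup.of (σM (ν n) m, n * n' * n⁻¹))⁻¹) ∈
      tensorRels M N (fun m n => σN (μ m) n) (fun n m => σM (ν n) m) :=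
    Or.inr ⟨(m, n, n'), rfl⟩
  have h := NATensor.mk_rel_one hmem
  rw [map_mul, map_inv, map_mul] at h
  exact mul_inv_eq_one.mp h

lemma NATensor.exchange (hμ : IsCrossedModule μ σM) (hν : IsCrossedModule ν σN)
    (m m' : M) (n n' : N) :
    (tensorOf (σM (μ m * ν n) m') (σN (μ m * ν n) n') : NATensor.T μ ν σM σN) *
        tensorOf m n =
      tensorOf m n * tensorOf (σM (ν n * μ m) m') (σN (ν n * μ m) n') := by
  -- component identifications
  have ha : σM (ν (σN (μ m) n)) (m * m' * m⁻¹) = σM (μ m * ν n) m' := by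
    rw [← hμ.2, hν.1, NATensor.compM, inv_mul_cancel_right]
  have hb : σN (μ m) n * σN (μ m) n' * (σN (μ m) n)⁻¹ = σN (μ m * ν n) n' := by
    rw [← hν.2, hν.1, NATensor.compN, inv_mul_cancel_right]
  have hc : σM (ν n) m * σM (ν n) m' * (σM (ν n) m)⁻¹ = σM (ν n * μ m) m' := by
    rw [← hμ.2, hμ.1, NATensor.compM, inv_mul_cancel_right]
  have hd : σN (μ (σM (ν n) m)) (n * n' * n⁻¹) = σN (ν n * μ m) n' := by
    rw [← hν.2, hμ.1, NATensor.compN, inv_mul_cancel_right]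
  -- expand (m m') ⊗ (n n') two ways
  have e1 := NATensor.rel1 μ ν σM σN m m' (n * n')
  have e2 := NATensor.rel2 μ ν σM σN (m * m' * m⁻¹) (σN (μ m) n) (σN (μ m) n')
  have e3 := NATensor.rel2 μ ν σM σN m n n'
  rw [map_mul, e2, e3] at e1
  have f1 := NATensor.rel2 μ ν σM σN (m * m') n n'
  have f2 := NATensor.rel1 μ ν σM σN m m' n
  have f3 := NATensor.rel1 μ ν σM σN (σM (ν n) m) (σM (ν n) m') (n * n' * n⁻¹)
  rw [f2, map_mul, f3] at f1
  have hE := e1.symm.trans f1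
  rw [ha, hb, hc, hd] at hE
  simp only [mul_assoc] at hE
  have h1 := mul_left_cancel hE
  rw [← mul_assoc, ← mul_assoc] at h1
  exact mul_right_cancel h1

lemma NATensor.key (hμ : IsCrossedModule μ σM) (hν : IsCrossedModule ν σN)
    (m a : M) (n b : N) :
    (tensorOf m n : NATensor.T μ ν σM σN) * tensorOf a b =
      tensorOf (σM (μ m * ν n * (μ m)⁻¹ * (ν n)⁻¹) a)
          (σN (μ m * ν n * (μ m)⁻¹ * (ν n)⁻¹) b) * tensorOf m n := by
  have h := NATensor.exchange μ ν σM σN hμ hν m (σM (ν n * μ m)⁻¹ a) n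
    (σN (ν n * μ m)⁻¹ b)
  rw [NATensor.compM, NATensor.compN, NATensor.compM, NATensor.compN] at h
  have k1 : μ m * ν n * (ν n * μ m)⁻¹ = μ m * ν n * (μ m)⁻¹ * (ν n)⁻¹ := by group
  have k2 : ν n * μ m * (ν n * μ m)⁻¹ = 1 := mul_inv_cancel _
  rw [k1, k2, map_one] at h
  simpa using h.symm

end Aux

/-- Given crossed modules `μ : M → L` and `ν : N → L`, the homomorphism
`λ : M ⊗ N → L` with `λ(m ⊗ n) = μ(m)·ν(n)·μ(m)⁻¹·ν(n)⁻¹` together with the action of `L`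
on `M ⊗ N` determined by `ˡ(m ⊗ n) = (ˡm) ⊗ (ˡn)` is a crossed module over `L`. -/
theorem tensor_is_crossed_module
    {M N L : Type*} [Group M] [Group N] [Group L]
    (μ : M →* L) (ν : N →* L) (σM : L →* MulAut M) (σN : L →* MulAut N)
    (hμ : IsCrossedModule μ σM) (hν : IsCrossedModule ν σN)
    (lam : NATensor M N (fun m n => σN (μ m) n) (fun n m => σM (ν n) m) →* L)
    (hlam : ∀ (m : M) (n : N),
      lam (tensorOf m n) = μ m * ν n * (μ m)⁻¹ * (ν n)⁻¹)
    (φ : L →* MulAut (NATensor M N (fun m n => σN (μ m) n) (fun n m => σM (ν n) m)))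
    (hφ : ∀ (l : L) (m : M) (n : N),
      φ l (tensorOf m n) = tensorOf (σM l m) (σN l n)) :
    IsCrossedModule lam φ := by
  constructor
  · intro l t
    have hhom : lam.comp (φ l).toMonoidHom = (MulAut.conj l).toMonoidHom.comp lam := by
      apply PresentedGroup.ext
      rintro ⟨m, n⟩
      show lam (φ l (tensorOf m n)) = MulAut.conj l (lam (tensorOf m n))
      rw [hφ, hlam, hlam, MulAut.conj_apply, hμ.1, hν.1]
      group
    have := DFunLike.congr_fun hhom t
    simpa [MulAut.conj_apply] using this
  · intro t t'
    have key : ∀ (m : M) (n : N),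
        φ (lam (tensorOf m n)) = MulAut.conj (tensorOf m n) := by
      intro m n
      apply MulEquiv.toMonoidHom_injective
      apply PresentedGroup.ext
      rintro ⟨a, b⟩
      show φ (lam (tensorOf m n)) (tensorOf a b) =
        MulAut.conj (tensorOf m n) (tensorOf a b)
      rw [hlam, hφ, MulAut.conj_apply, eq_mul_inv_iff_mul_eq]
      exact (NATensor.key μ ν σM σN hμ hν m a n b).symm
    have main : φ.comp lam = MulAut.conj := by
      apply PresentedGroup.ext
      rintro ⟨m, n⟩
      exact key m n
    have h := DFunLike.congr_fun main t
    simp only [MonoidHom.comp_apply] at h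
    rw [h, MulAut.conj_apply]
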